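/- (Lemma 1, forward direction.) Let N ≥ 1, α ∈ ℝ and θ_1,…,θ_N ∈ ℝ. Suppose that for every i = 2,…,N one has ∑_{j=1}^N sin(θ_1 − θ_j − α) = ∑_{j=1}^N sin(θ_i − θ_j − α), i.e. g_1(θ,α) = g_i(θ,α) for all i. Then at least one of the following holds: (a) ∑_{j=1}^N cos θ_j = 0 and ∑_{j=1}^N sin θ_j = 0; (b) there exist a, b ∈ ℝ such that every θ_i is congruent modulo 2π either to a or to b (i.e. the phases take at most two distinct values modulo 2π). -/

import Mathlib

open Real Finset

lemma sin_eq_sin_cases {x y : ℝ} (h : Real.sin x = Real.sin y) :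
    (∃ k : ℤ, x - y = 2 * π * k) ∨ (∃ k : ℤ, x + y - π = 2 * π * k) := by
  have h0 : Real.sin x - Real.sin y = 0 := by linarith
  rw [Real.sin_sub_sin] at h0
  rcases mul_eq_zero.1 h0 with h1 | h2
  · rcases mul_eq_zero.1 h1 with h3 | h4
    · norm_num at h3
    · left
      rcases Real.sin_eq_zero_iff.1 h4 with ⟨k, hk⟩
      exact ⟨k, by linarith⟩
  · right
    rcases Real.cos_eq_zero_iff.1 h2 with ⟨k, hk⟩
    refine ⟨k, ?_⟩
    have : (x + y) / 2 = (2 * k + 1) * π / 2 := hk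
    push_cast at this ⊢
    linarith

/-- Lemma 1 (forward direction) for the Kuramoto–Sakaguchi model: if all the
coupling terms `g_i(θ,α) = -∑_j sin(θ_i - θ_j - α)` coincide, then either the
order parameter vanishes, or the phases take at most two distinct values
modulo `2π` (a one- or two-cluster state). -/
theorem stmt_1 (N : ℕ) (hN : 1 ≤ N) (α : ℝ) (θ : Fin N → ℝ)
    (heq : ∀ i : Fin N, ∑ j, Real.sin (θ ⟨0, hN⟩ - θ j - α)
                      = ∑ j, Real.sin (θ i - θ j - α)) :
    ((∑ j, Real.cos (θ j)) = 0 ∧ (∑ j, Real.sin (θ j)) = 0) ∨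
    (∃ a b : ℝ, ∀ i : Fin N,
       (∃ k : ℤ, θ i - a = 2 * π * k) ∨ (∃ k : ℤ, θ i - b = 2 * π * k)) := by
  set C : ℝ := ∑ j, Real.cos (θ j) with hC
  set S : ℝ := ∑ j, Real.sin (θ j) with hS
  by_cases hz : C = 0 ∧ S = 0
  · exact Or.inl hz
  · right
    set z : ℂ := ⟨C, S⟩ with hzdef
    have hzne : z ≠ 0 := by
      intro h
      apply hz
      constructor
      · simpa using congrArg Complex.re h
      · simpa using congrArg Complex.im h
    set R : ℝ := ‖z‖ with hR
    have hRpos : 0 < R := by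
      simpa [hR] using (norm_pos_iff.mpr hzne)
    set φ : ℝ := Complex.arg z with hφ
    have hcos : Real.cos φ = C / R := by
      simpa [hzdef, hR] using Complex.cos_arg hzne
    have hsin : Real.sin φ = S / R := by
      simpa [hzdef, hR] using Complex.sin_arg z
    have hCR : C = R * Real.cos φ := by
      rw [hcos, mul_div_assoc']; exact (mul_div_cancel_left₀ C (ne_of_gt hRpos)).symm
    have hSR : S = R * Real.sin φ := by
      rw [hsin, mul_div_assoc']; exact (mul_div_cancel_left₀ S (ne_of_gt hRpos)).symm
    -- rewrite the sums
    have key : ∀ i : Fin N, ∑ j, Real.sin (θ i - θ j - α)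
        = R * Real.sin (θ i - α - φ) := by
      intro i
      have : ∑ j, Real.sin (θ i - θ j - α)
          = ∑ j, (Real.sin (θ i - α) * Real.cos (θ j)
                  - Real.cos (θ i - α) * Real.sin (θ j)) := by
        refine Finset.sum_congr rfl fun j _ => ?_
        rw [show θ i - θ j - α = (θ i - α) - θ j by ring, Real.sin_sub]
      rw [this, Finset.sum_sub_distrib, ← Finset.mul_sum, ← Finset.mul_sum,
        ← hC, ← hS, hCR, hSR, Real.sin_sub (θ i - α) φ]
      ring
    have hsins : ∀ i : Fin N,
        Real.sin (θ i - α - φ) = Real.sin (θ ⟨0, hN⟩ - α - φ) := by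
      intro i
      have := heq i
      rw [key i, key ⟨0, hN⟩] at this
      exact (mul_left_cancel₀ (ne_of_gt hRpos) this.symm)
    refine ⟨θ ⟨0, hN⟩, π + 2*α + 2*φ - θ ⟨0, hN⟩, fun i => ?_⟩
    rcases sin_eq_sin_cases (hsins i) with ⟨k, hk⟩ | ⟨k, hk⟩
    · exact Or.inl ⟨k, by linarith⟩
    · exact Or.inr ⟨k, by linarith⟩
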